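/- For the congruence subgroup Γ(m) = {M ∈ SL(n+1,ℤ) : M ≡ I mod m} and a primitive vector a ∈ ℤ^{n+1}, the orbit aΓ(m) equals the set of all primitive vectors b ∈ ℤ^{n+1} with b ≡ a (mod m). -/

import Mathlib

open Matrix

noncomputable section

abbrev SL (m : ℕ) (R : Type) [CommRing R] := Matrix.SpecialLinearGroup (Fin m) R

def lastVec (n : ℕ) (R : Type) [CommRing R] : Fin (n+1) → R := Pi.single (Fin.last n) 1

def Primitive {n : ℕ} (a : Fin (n+1) → ℤ) : Prop := Finset.univ.gcd a = 1

/-- The stabilizer of the row vector (0,...,0,1) under right multiplication. -/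
def stab (n : ℕ) (R : Type) [CommRing R] : Subgroup (SL (n+1) R) where
  carrier := {γ | Matrix.vecMul (lastVec n R) (γ : Matrix (Fin (n+1)) (Fin (n+1)) R) = lastVec n R}
  one_mem' := by simp
  mul_mem' := by
    intro a b ha hb
    simp only [Set.mem_setOf_eq] at *
    rw [Matrix.SpecialLinearGroup.coe_mul, ← Matrix.vecMul_vecMul, ha, hb]
  inv_mem' := by
    intro a ha
    simp only [Set.mem_setOf_eq] at *
    conv_lhs => rw [← ha]
    rw [Matrix.vecMul_vecMul, ← Matrix.SpecialLinearGroup.coe_mul, mul_inv_cancel,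
      Matrix.SpecialLinearGroup.coe_one, Matrix.vecMul_one]

/-- The diagonal matrix a(y) = diag(y^{1/n} I_n, y⁻¹). -/
def aMat (n : ℕ) (y : ℝ) : Matrix (Fin (n+1)) (Fin (n+1)) ℝ :=
  Matrix.diagonal (fun i => if i = Fin.last n then y⁻¹ else y ^ ((n : ℝ)⁻¹))

/-- The unipotent matrix h(x), with bottom-left row −x. -/
def hMat {n : ℕ} (x : Fin n → ℝ) : Matrix (Fin (n+1)) (Fin (n+1)) ℝ :=
  fun i j => if i = j then 1 else
    if i = Fin.last n then (if hj : j = Fin.last n then 0 else -x (j.castPred hj)) else 0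

/-- The unipotent integer matrix u(x). -/
def uMat {n : ℕ} (x : Fin n → ℤ) : Matrix (Fin (n+1)) (Fin (n+1)) ℤ :=
  fun i j => if i = j then 1 else
    if i = Fin.last n then (if hj : j = Fin.last n then 0 else x (j.castPred hj)) else 0

/-- The Euclidean norm on ℝ^n. -/
def enorm {n : ℕ} (v : Fin n → ℝ) : ℝ := Real.sqrt (∑ i, (v i)^2)

abbrev mapSL (n : ℕ) : SL (n+1) ℤ →* SL (n+1) ℝ :=
  Matrix.SpecialLinearGroup.map (Int.castRingHom ℝ)

instance (m : ℕ) : TopologicalSpace (SL m ℝ) :=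
  TopologicalSpace.induced (fun A => (A : Matrix (Fin m) (Fin m) ℝ)) inferInstance

namespace S19

variable {n m : ℕ}

abbrev Phi (n m : ℕ) : SL (n+1) ℤ →* SL (n+1) (ZMod m) :=
  Matrix.SpecialLinearGroup.map (Int.castRingHom (ZMod m))

def rel (n m : ℕ) (a b : Fin (n+1) → ℤ) : Prop :=
  ∃ δ : SL (n+1) ℤ, Phi n m δ = 1 ∧ Matrix.vecMul a (δ : Matrix (Fin (n+1)) (Fin (n+1)) ℤ) = b

lemma rel_refl (a : Fin (n+1) → ℤ) : rel n m a a :=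
  ⟨1, map_one _, by simp⟩

lemma rel_trans {a b c : Fin (n+1) → ℤ} (h1 : rel n m a b) (h2 : rel n m b c) : rel n m a c := by
  obtain ⟨δ, hδ, rfl⟩ := h1
  obtain ⟨ε, hε, rfl⟩ := h2
  exact ⟨δ * ε, by rw [_root_.map_mul, hδ, hε, one_mul],
    by rw [Matrix.SpecialLinearGroup.coe_mul, Matrix.vecMul_vecMul]⟩

lemma rel_symm {a b : Fin (n+1) → ℤ} (h : rel n m a b) : rel n m b a := by
  obtain ⟨δ, hδ, rfl⟩ := h
  refine ⟨δ⁻¹, by rw [_root_.map_inv, hδ, inv_one], ?_⟩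
  rw [Matrix.vecMul_vecMul, ← Matrix.SpecialLinearGroup.coe_mul, mul_inv_cancel,
    Matrix.SpecialLinearGroup.coe_one, Matrix.vecMul_one]

lemma phi_eq_one_iff (δ : SL (n+1) ℤ) :
    Phi n m δ = 1 ↔ ∀ i j, (δ : Matrix (Fin (n+1)) (Fin (n+1)) ℤ) i j
      ≡ (1 : Matrix (Fin (n+1)) (Fin (n+1)) ℤ) i j [ZMOD (m : ℤ)] := by
  rw [Matrix.SpecialLinearGroup.ext_iff]
  simp only [Matrix.SpecialLinearGroup.coe_one]
  constructor
  · intro h i j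
    have := h i j
    simp only [Matrix.SpecialLinearGroup.map_apply_coe, RingHom.mapMatrix_apply,
      Matrix.map_apply, Int.coe_castRingHom] at this
    rw [← ZMod.intCast_eq_intCast_iff]
    rw [this, Matrix.one_apply]
    simp [Matrix.one_apply, apply_ite (Int.cast : ℤ → ZMod m)]
  · intro h i j
    have := h i j
    rw [← ZMod.intCast_eq_intCast_iff] at this
    simp only [Matrix.SpecialLinearGroup.map_apply_coe, RingHom.mapMatrix_apply,
      Matrix.map_apply, Int.coe_castRingHom]
    rw [this, Matrix.one_apply]
    simp [Matrix.one_apply, apply_ite (Int.cast : ℤ → ZMod m)]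

lemma vecMul_transvection {R : Type} [CommRing R] (b : Fin (n+1) → R) {i j : Fin (n+1)}
    (hij : i ≠ j) (c : R) :
    Matrix.vecMul b (Matrix.transvection i j c) = Function.update b j (b j + c * b i) := by
  funext k
  simp only [Matrix.transvection, Matrix.vecMul_add, Matrix.vecMul_one, Matrix.smul_vecMul,
    Pi.add_apply, Pi.smul_apply, smul_eq_mul]
  by_cases hk : k = j
  · subst hk
    rw [Function.update_self]
    congr 1
    simp [Matrix.vecMul, dotProduct, Matrix.single_apply_of_ne, Matrix.single,
      ite_and, mul_comm]
  · rw [Function.update_of_ne hk]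
    simp [Matrix.vecMul, dotProduct, Matrix.single, ite_and, Ne.symm hk]

lemma rel_move {i j : Fin (n+1)} (hij : i ≠ j) {c : ℤ} (hc : (m:ℤ) ∣ c) (b : Fin (n+1) → ℤ) :
    rel n m b (Function.update b j (b j + c * b i)) := by
  refine ⟨⟨Matrix.transvection i j c, Matrix.det_transvection_of_ne i j hij c⟩, ?_, ?_⟩
  · apply Subtype.ext
    simp only [Matrix.SpecialLinearGroup.map_apply_coe, RingHom.mapMatrix_apply,
      Matrix.SpecialLinearGroup.coe_one]
    have h0 : ((c : ZMod m)) = 0 := (ZMod.intCast_zmod_eq_zero_iff_dvd c m).mpr hc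
    have : (Matrix.transvection i j c).map (Int.castRingHom (ZMod m))
        = Matrix.transvection i j ((c : ZMod m)) := by
      ext u v
      simp [Matrix.transvection, Matrix.single, Matrix.one_apply, ite_and,
        apply_ite (Int.cast : ℤ → ZMod m)]
    change (Matrix.transvection i j c).map (Int.castRingHom (ZMod m)) = 1
    rw [this, h0, Matrix.transvection_zero]
  · exact vecMul_transvection b hij c

lemma primitive_vecMul (a : Fin (n+1) → ℤ) (δ : SL (n+1) ℤ) (ha : Primitive a) :
    Primitive (Matrix.vecMul a (δ : Matrix (Fin (n+1)) (Fin (n+1)) ℤ)) := by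
  have key : ∀ (v : Fin (n+1) → ℤ) (M : Matrix (Fin (n+1)) (Fin (n+1)) ℤ),
      Finset.univ.gcd v ∣ Finset.univ.gcd (Matrix.vecMul v M) := by
    intro v M
    refine Finset.dvd_gcd fun k _ => ?_
    unfold Matrix.vecMul dotProduct
    exact Finset.dvd_sum fun l _ => Dvd.dvd.mul_right (Finset.gcd_dvd (Finset.mem_univ l)) _
  have h2 : Matrix.vecMul (Matrix.vecMul a ↑δ) (↑(δ⁻¹) : Matrix (Fin (n+1)) (Fin (n+1)) ℤ) = a := by
    rw [Matrix.vecMul_vecMul, ← Matrix.SpecialLinearGroup.coe_mul, mul_inv_cancel,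
      Matrix.SpecialLinearGroup.coe_one, Matrix.vecMul_one]
  have h3 := key (Matrix.vecMul a ↑δ) ↑(δ⁻¹)
  rw [h2, ha] at h3
  rw [Primitive, ← Finset.normalize_gcd]
  exact normalize_eq_one.mpr (isUnit_of_dvd_one h3)

lemma rel_primitive {a b : Fin (n+1) → ℤ} (h : rel n m a b) (ha : Primitive a) : Primitive b := by
  obtain ⟨δ, -, rfl⟩ := h
  exact primitive_vecMul a δ ha

lemma reach_single (hn : 1 ≤ n) (i : Fin (n+1)) :
    rel n 1 (Pi.single i (1:ℤ)) (lastVec n ℤ) := by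
  by_cases hi : i = Fin.last n
  · subst hi; exact rel_refl _
  · have h1 := rel_move (m := 1) (i := i) (j := Fin.last n) hi (one_dvd (1:ℤ))
      (Pi.single i (1:ℤ))
    set v1 := Function.update (Pi.single i (1:ℤ) : Fin (n+1) → ℤ) (Fin.last n)
      ((Pi.single i (1:ℤ) : Fin (n+1) → ℤ) (Fin.last n) + 1 * (Pi.single i (1:ℤ) : Fin (n+1) → ℤ) i) with hv1
    have h2 := rel_move (m := 1) (i := Fin.last n) (j := i) (Ne.symm hi) (one_dvd (-1:ℤ)) v1
    refine rel_trans (rel_trans h1 h2) ?_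
    have : Function.update v1 i (v1 i + (-1) * v1 (Fin.last n)) = lastVec n ℤ := by
      funext j
      rcases eq_or_ne j i with rfl | hji
      · simp [hv1, Function.update_apply, Function.update_self, Pi.single_apply, hi, Ne.symm hi,
          lastVec]
      · rcases eq_or_ne j (Fin.last n) with rfl | hjl
        · simp [hv1, Function.update_apply, Ne.symm hi, hi, Pi.single_apply, lastVec]
        · simp [hv1, Function.update_apply, hji, hjl, Pi.single_apply, lastVec, Ne.symm hji,
            Ne.symm hjl]
    rw [this] at *
    exact rel_refl _

lemma reach_neg_single (hn : 1 ≤ n) (i : Fin (n+1)) :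
    rel n 1 (Pi.single i (-1:ℤ)) (lastVec n ℤ) := by
  have hnt : Nontrivial (Fin (n+1)) := ⟨⟨0, ⟨1, by omega⟩, by
    intro h; have := congrArg Fin.val h; simp at this⟩⟩
  obtain ⟨j, hji⟩ := exists_ne i
  have h1 := rel_move (m := 1) (i := i) (j := j) (Ne.symm hji) (one_dvd (-1:ℤ))
    (Pi.single i (-1:ℤ))
  set v1 := Function.update (Pi.single i (-1:ℤ) : Fin (n+1) → ℤ) j
    ((Pi.single i (-1:ℤ) : Fin (n+1) → ℤ) j + (-1) * (Pi.single i (-1:ℤ) : Fin (n+1) → ℤ) i) with hv1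
  have h2 := rel_move (m := 1) (i := j) (j := i) hji (one_dvd (1:ℤ)) v1
  refine rel_trans (rel_trans h1 h2) ?_
  have : Function.update v1 i (v1 i + 1 * v1 j) = Pi.single j (1:ℤ) := by
    funext l
    rcases eq_or_ne l i with rfl | hli
    · simp [hv1, Function.update_apply, hji, Ne.symm hji, Pi.single_apply]
    · rcases eq_or_ne l j with rfl | hlj
      · simp [hv1, Function.update_apply, hji, Ne.symm hji, Pi.single_apply, hli]
      · simp [hv1, Function.update_apply, hli, hlj, Pi.single_apply, Ne.symm hli, Ne.symm hlj]
  rw [this]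
  exact reach_single hn j

lemma stepA (hn : 1 ≤ n) : ∀ N : ℕ, ∀ v : Fin (n+1) → ℤ, (∑ i, (v i).natAbs) = N →
    Primitive v → rel n 1 v (lastVec n ℤ) := by
  intro N
  induction N using Nat.strong_induction_on with
  | _ N IH =>
  intro v hN hv
  by_cases hex : ∃ p : Fin (n+1) × Fin (n+1), p.1 ≠ p.2 ∧ v p.1 ≠ 0 ∧ v p.2 ≠ 0
  · obtain ⟨⟨i, j⟩, hij, hvi, hvj⟩ := hex
    have key : ∀ i j : Fin (n+1), i ≠ j → v i ≠ 0 → v j ≠ 0 →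
        (v j).natAbs ≤ (v i).natAbs → rel n 1 v (lastVec n ℤ) := by
      intro i j hij hvi hvj hle
      have hmove := rel_move (m := 1) (i := j) (j := i) (Ne.symm hij)
        (one_dvd (-(v i / v j))) v
      have hval : v i + -(v i / v j) * v j = v i % v j := by
        rw [Int.emod_def]; ring
      rw [hval] at hmove
      set v' := Function.update v i (v i % v j) with hv'
      have hprim : Primitive v' := rel_primitive hmove hv
      have hlt : (v i % v j).natAbs < (v i).natAbs := by
        have h1 : 0 ≤ v i % v j := Int.emod_nonneg _ hvj
        have h2 : v i % v j < |v j| := by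
          rcases hvj.lt_or_gt with h | h
          · have h2 := Int.emod_lt_of_pos (v i) (neg_pos.mpr h)
            rw [Int.emod_neg] at h2
            rw [abs_of_neg h]
            exact h2
          · rw [abs_of_pos h]
            exact Int.emod_lt_of_pos _ h
        have h3 : ((v i % v j).natAbs : ℤ) = v i % v j := Int.natAbs_of_nonneg h1
        have h4 : |v j| = ((v j).natAbs : ℤ) := Int.abs_eq_natAbs _
        omega
      have hsum : (∑ l, (v' l).natAbs) < N := by
        have e1 : (∑ l, (v' l).natAbs) = (v i % v j).natAbs
            + ∑ l ∈ Finset.univ \ {i}, (v l).natAbs := by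
          rw [hv']
          rw [show (fun l => (Function.update v i (v i % v j) l).natAbs)
            = Function.update (fun l => (v l).natAbs) i (v i % v j).natAbs from ?_]
          · exact Finset.sum_update_of_mem (Finset.mem_univ i) _ _
          · funext l
            rcases eq_or_ne l i with rfl | h
            · simp
            · simp [Function.update_of_ne h]
        have e2 : N = (v i).natAbs + ∑ l ∈ Finset.univ \ {i}, (v l).natAbs := by
          rw [← hN]
          exact Finset.sum_eq_add_sum_sdiff_singleton_of_mem (Finset.mem_univ i) _
        omega
      exact rel_trans hmove (IH _ hsum v' rfl hprim)
    rcases le_total ((v j).natAbs) ((v i).natAbs) with h | h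
    · exact key i j hij hvi hvj h
    · exact key j i (Ne.symm hij) hvj hvi h
  · push_neg at hex
    have hone : ∀ i j : Fin (n+1), i ≠ j → v i ≠ 0 → v j = 0 := by
      intro i j h hi
      exact hex ⟨i, j⟩ h hi
    have hnz : ∃ i, v i ≠ 0 := by
      by_contra hall
      push_neg at hall
      have : Finset.univ.gcd v = 0 := Finset.gcd_eq_zero_iff.mpr fun i _ => hall i
      rw [Primitive, this] at hv
      exact one_ne_zero hv.symm
    obtain ⟨i, hi⟩ := hnz
    have hu : IsUnit (v i) := by
      have : v i ∣ Finset.univ.gcd v := Finset.dvd_gcd fun l _ => by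
        rcases eq_or_ne l i with rfl | h
        · exact dvd_refl _
        · rw [hone i l (Ne.symm h) hi]; exact dvd_zero _
      rw [hv] at this
      exact isUnit_of_dvd_one this
    have hvsingle : ∀ c : ℤ, v i = c → v = Pi.single i c := by
      intro c hc
      funext l
      rcases eq_or_ne l i with rfl | h
      · simp [hc]
      · rw [hone i l (Ne.symm h) hi]
        simp [Pi.single_apply, h]
    rcases Int.isUnit_iff.mp hu with h1 | h1
    · rw [hvsingle 1 h1]; exact reach_single hn i
    · rw [hvsingle (-1) h1]; exact reach_neg_single hn i

lemma finset_gcd_bezout {ι : Type*} [DecidableEq ι] (s : Finset ι) (v : ι → ℤ) :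
    ∃ c : ι → ℤ, ∑ i ∈ s, c i * v i = s.gcd v := by
  classical
  induction s using Finset.induction_on with
  | empty => exact ⟨0, by simp⟩
  | insert a s ha IH =>
    obtain ⟨c, hc⟩ := IH
    rw [Finset.gcd_insert]
    have hbez : (Int.gcd (v a) (s.gcd v) : ℤ)
        = v a * Int.gcdA (v a) (s.gcd v) + s.gcd v * Int.gcdB (v a) (s.gcd v) :=
      Int.gcd_eq_gcd_ab _ _
    have hg : (Int.gcd (v a) (s.gcd v) : ℤ) = GCDMonoid.gcd (v a) (s.gcd v) :=
      Int.coe_gcd _ _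
    refine ⟨fun i => if i = a then Int.gcdA (v a) (s.gcd v)
      else Int.gcdB (v a) (s.gcd v) * c i, ?_⟩
    rw [Finset.sum_insert ha]
    beta_reduce
    have : ∑ i ∈ s, (if i = a then Int.gcdA (v a) (s.gcd v)
        else Int.gcdB (v a) (s.gcd v) * c i) * v i
        = Int.gcdB (v a) (s.gcd v) * ∑ i ∈ s, c i * v i := by
      rw [Finset.mul_sum]
      refine Finset.sum_congr rfl fun i hi => ?_
      rw [if_neg (by rintro rfl; exact ha hi)]
      ring
    rw [this, hc, ← hg, hbez, if_pos rfl]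
    ring

lemma exists_coprime_ap (x D z : ℤ) (m : ℕ) (hz : z ≠ 0) (hxD : IsCoprime x D)
    (hDz : D ∣ z) (hzm : IsCoprime z (m : ℤ)) :
    ∃ u : ℤ, IsCoprime (x + (m : ℤ) * D * u) z := by
  classical
  set ps := z.natAbs.primeFactors.filter (fun p : ℕ => ¬((p : ℤ) ∣ x)) with hps
  refine ⟨((ps.prod (id : ℕ → ℕ) : ℕ) : ℤ), ?_⟩
  rw [Int.isCoprime_iff_gcd_eq_one]
  by_contra hne
  obtain ⟨p, pp, hpd⟩ := Nat.exists_prime_and_dvd hne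
  have hp1 : (p : ℤ) ∣ x + (m : ℤ) * D * ((ps.prod (id : ℕ → ℕ) : ℕ) : ℤ) := by
    exact (Int.natCast_dvd_natCast.mpr hpd).trans (Int.gcd_dvd_left _ _)
  have hp2 : (p : ℤ) ∣ z := by
    exact (Int.natCast_dvd_natCast.mpr hpd).trans (Int.gcd_dvd_right _ _)
  have ppz : Prime (p : ℤ) := Nat.prime_iff_prime_int.mp pp
  by_cases hpx : (p : ℤ) ∣ x
  · have h3 : (p : ℤ) ∣ (m : ℤ) * D * ((ps.prod (id : ℕ → ℕ) : ℕ) : ℤ) := by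
      have := dvd_sub hp1 hpx
      simpa using this
    rcases ppz.dvd_mul.mp h3 with h4 | h4
    · rcases ppz.dvd_mul.mp h4 with h5 | h5
      · -- p ∣ m : contradicts IsCoprime z m
        have : (p : ℤ) ∣ 1 := by
          have hg := Int.isCoprime_iff_gcd_eq_one.mp hzm
          have : (p : ℕ) ∣ Int.gcd z (m : ℤ) := Nat.dvd_gcd
            (Int.natAbs_dvd_natAbs.mpr hp2) (Int.natAbs_dvd_natAbs.mpr h5)
          rw [hg] at this
          exact_mod_cast Int.natCast_dvd_natCast.mpr this
        exact ppz.not_unit (isUnit_of_dvd_one this)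
      · -- p ∣ D : contradicts IsCoprime x D
        have : (p : ℤ) ∣ 1 := by
          have hg := Int.isCoprime_iff_gcd_eq_one.mp hxD
          have : (p : ℕ) ∣ Int.gcd x D := Nat.dvd_gcd
            (Int.natAbs_dvd_natAbs.mpr hpx) (Int.natAbs_dvd_natAbs.mpr h5)
          rw [hg] at this
          exact_mod_cast Int.natCast_dvd_natCast.mpr this
        exact ppz.not_unit (isUnit_of_dvd_one this)
    · -- p ∣ prod ps : p equals some q ∈ ps, but those don't divide x
      have h5 : p ∣ ps.prod (id : ℕ → ℕ) := by exact_mod_cast h4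
      obtain ⟨q, hq, hq'⟩ := (Nat.Prime.prime pp).dvd_finset_prod_iff (id : ℕ → ℕ) |>.mp h5
      rw [hps, Finset.mem_filter] at hq
      have : p = q := (Nat.prime_dvd_prime_iff_eq pp
        (Nat.prime_of_mem_primeFactors hq.1)).mp hq'
      exact hq.2 (this ▸ hpx)
  · -- p ∤ x : then p ∈ ps so p ∣ prod, giving p ∣ x, contradiction
    have hpz : p ∣ z.natAbs := Int.natAbs_dvd_natAbs.mpr hp2
    have hmem : p ∈ ps := by
      rw [hps, Finset.mem_filter]
      exact ⟨Nat.mem_primeFactors.mpr ⟨pp, hpz, Int.natAbs_ne_zero.mpr hz⟩, hpx⟩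
    have : (p : ℤ) ∣ (m : ℤ) * D * ((ps.prod (id : ℕ → ℕ) : ℕ) : ℤ) := by
      refine Dvd.dvd.mul_left ?_ _
      exact_mod_cast Finset.dvd_prod_of_mem id hmem
    exact hpx (by simpa using dvd_sub hp1 this)

lemma rel_add_combo (p : Fin (n+1)) (s : Finset (Fin (n+1))) (hp : p ∉ s)
    (w : Fin (n+1) → ℤ) :
    ∀ b : Fin (n+1) → ℤ, rel n m b
      (Function.update b p (b p + (m:ℤ) * ∑ i ∈ s, w i * b i)) := by
  classical
  induction s using Finset.induction_on with
  | empty =>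
    intro b
    simpa using rel_refl b
  | insert a s ha IH =>
    intro b
    have hp' : p ∉ s := fun h => hp (Finset.mem_insert_of_mem h)
    have hap : a ≠ p := fun h => hp (h ▸ Finset.mem_insert_self a s)
    have h1 := rel_move (m := m) (i := a) (j := p) hap
      (Dvd.intro (w a) rfl : (m:ℤ) ∣ (m:ℤ) * w a) b
    set b' := Function.update b p (b p + (m:ℤ) * w a * b a) with hb'
    have h2 := IH hp' b'
    have key : Function.update b' p (b' p + (m:ℤ) * ∑ i ∈ s, w i * b' i)
        = Function.update b p (b p + (m:ℤ) * ∑ i ∈ insert a s, w i * b i) := by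
      have hsum : ∑ i ∈ s, w i * b' i = ∑ i ∈ s, w i * b i := by
        refine Finset.sum_congr rfl fun i hi => ?_
        rw [hb', Function.update_of_ne (ne_of_mem_of_not_mem hi hp')]
      rw [hb', Function.update_idem, Function.update_self, hsum, Finset.sum_insert ha]
      congr 1
      ring
    rw [key] at h2
    exact rel_trans h1 h2

lemma rel_clear {p q : Fin (n+1)} (hpq : p ≠ q) (s : Finset (Fin (n+1))) :
    ∀ b : Fin (n+1) → ℤ, IsCoprime (b p) (b q) → (∀ i, i ≠ q → (m:ℤ) ∣ b i) →
      rel n m b (fun j => if j ∈ s ∧ j ≠ p ∧ j ≠ q then 0 else b j) := by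
  classical
  induction s using Finset.induction_on with
  | empty =>
    intro b _ _
    have : (fun j => if j ∈ (∅ : Finset (Fin (n+1))) ∧ j ≠ p ∧ j ≠ q then 0 else b j) = b := by
      funext j; simp
    rw [this]
    exact rel_refl b
  | insert a s ha IH =>
    intro b hco hdv
    by_cases hap : a = p ∨ a = q
    · have heq : (fun j => if j ∈ insert a s ∧ j ≠ p ∧ j ≠ q then 0 else b j)
          = fun j => if j ∈ s ∧ j ≠ p ∧ j ≠ q then 0 else b j := by
        funext j
        rcases eq_or_ne j a with rfl | hja
        · rcases hap with rfl | rfl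
          · simp
          · simp
        · simp [Finset.mem_insert, hja]
      rw [heq]
      exact IH b hco hdv
    · push_neg at hap
      obtain ⟨hap1, hap2⟩ := hap
      obtain ⟨ca, hca⟩ := hdv a hap2
      obtain ⟨σ, τ, hst⟩ := id hco
      -- two moves to clear coordinate a
      have h1 := rel_move (m := m) (i := p) (j := a) (Ne.symm hap1)
        (Dvd.intro (-ca * σ) rfl : (m:ℤ) ∣ (m:ℤ) * (-ca * σ)) b
      set b1 := Function.update b a (b a + (m:ℤ) * (-ca * σ) * b p) with hb1
      have h2 := rel_move (m := m) (i := q) (j := a) (Ne.symm hap2)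
        (Dvd.intro (-ca * τ) rfl : (m:ℤ) ∣ (m:ℤ) * (-ca * τ)) b1
      have hb2 : Function.update b1 a (b1 a + (m:ℤ) * (-ca * τ) * b1 q)
          = Function.update b a 0 := by
        rw [hb1, Function.update_idem, Function.update_self,
          Function.update_of_ne (Ne.symm hap2)]
        congr 1
        have : b a + (m:ℤ) * (-ca * σ) * b p + (m:ℤ) * (-ca * τ) * b q
            = b a - (m:ℤ) * ca * (σ * b p + τ * b q) := by ring
        rw [this, hst, hca]
        ring
      rw [hb2] at h2
      have h3 := IH (Function.update b a 0)
        (by rwa [Function.update_of_ne hap1.symm, Function.update_of_ne hap2.symm])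
        (by
          intro i hi
          rcases eq_or_ne i a with rfl | hia
          · rw [Function.update_self]; exact dvd_zero _
          · rw [Function.update_of_ne hia]; exact hdv i hi)
      have heq : (fun j => if j ∈ s ∧ j ≠ p ∧ j ≠ q then 0 else Function.update b a 0 j)
          = fun j => if j ∈ insert a s ∧ j ≠ p ∧ j ≠ q then 0 else b j := by
        funext j
        rcases eq_or_ne j a with rfl | hja
        · simp [ha, hap1, hap2]
        · rw [Function.update_of_ne hja]
          simp [Finset.mem_insert, hja]
      rw [heq] at h3
      exact rel_trans h1 (rel_trans h2 h3)

section Phi2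
variable {k : ℕ} {R : Type} [CommRing R]

def phiB (g : Matrix (Fin 2) (Fin 2) R) : Matrix (Fin (k+2)) (Fin (k+2)) R :=
  Matrix.reindex finSumFinEquiv finSumFinEquiv (Matrix.fromBlocks 1 0 0 g)

lemma det_phiB (g : Matrix (Fin 2) (Fin 2) R) : (phiB (k := k) g).det = g.det := by
  rw [phiB, Matrix.det_reindex_self, Matrix.det_fromBlocks_zero₂₁, Matrix.det_one, one_mul]

lemma map_phiB {S : Type} [CommRing S] (f : R →+* S) (g : Matrix (Fin 2) (Fin 2) R) :
    (phiB (k := k) g).map f = phiB (g.map f) := by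
  ext i j
  simp only [phiB, Matrix.reindex_apply, Matrix.submatrix_apply, Matrix.map_apply]
  rcases (finSumFinEquiv.symm i) with p | p <;> rcases (finSumFinEquiv.symm j) with q | q <;>
    simp [Matrix.fromBlocks, Matrix.one_apply, apply_ite f]

lemma phiB_one : phiB (k := k) (1 : Matrix (Fin 2) (Fin 2) R) = 1 := by
  rw [phiB, Matrix.fromBlocks_one, Matrix.reindex_apply, Matrix.submatrix_one_equiv]

def pK (k : ℕ) : Fin (k+2) := finSumFinEquiv (Sum.inr (0 : Fin 2))
def pL (k : ℕ) : Fin (k+2) := finSumFinEquiv (Sum.inr (1 : Fin 2))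

lemma pK_val : (pK k).val = k := by simp [pK]
lemma pL_val : (pL k).val = k + 1 := by simp [pL]
lemma pL_eq_last : pL k = Fin.last (k+1) := by
  apply Fin.ext; simp [pL_val]
lemma pK_ne_pL : pK k ≠ pL k := by
  intro h
  have := congrArg Fin.val h
  rw [pK_val, pL_val] at this
  omega
lemma castAdd_ne_pK (p : Fin k) : (finSumFinEquiv (Sum.inl p) : Fin (k+2)) ≠ pK k := by
  intro h
  have := congrArg Fin.val h
  simp [pK_val] at this
  omega
lemma castAdd_ne_pL (p : Fin k) : (finSumFinEquiv (Sum.inl p) : Fin (k+2)) ≠ pL k := by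
  intro h
  have := congrArg Fin.val h
  simp [pL_val] at this
  omega

lemma vecMul_single (i : Fin (k+2)) (M : Matrix (Fin (k+2)) (Fin (k+2)) R) :
    Matrix.vecMul (Pi.single i (1:R)) M = M i := by
  funext j
  simp [Matrix.vecMul, dotProduct, Pi.single_apply, ite_mul]

lemma phiB_row_last (g : Matrix (Fin 2) (Fin 2) R) (j : Fin (k+2)) :
    phiB (k := k) g (pL k) j
      = if j = pK k then g 1 0 else if j = pL k then g 1 1 else 0 := by
  obtain ⟨s, rfl⟩ := finSumFinEquiv.surjective j
  simp only [phiB, Matrix.reindex_apply, Matrix.submatrix_apply, pL, pK,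
    Equiv.symm_apply_apply, Equiv.apply_eq_iff_eq]
  rcases s with p | p
  · simp [Matrix.fromBlocks]
  · fin_cases p <;> simp [Matrix.fromBlocks]

end Phi2

lemma completion (k m : ℕ) (hm : 1 < m) (b : Fin (k+2) → ℤ) (hb : Primitive b)
    (hcong : ∀ i, (m:ℤ) ∣ b i - lastVec (k+1) ℤ i) :
    rel (k+1) m (lastVec (k+1) ℤ) b := by
  classical
  -- basic facts
  have hKL : pK k ≠ pL k := pK_ne_pL
  have hlastK : lastVec (k+1) ℤ (pK k) = 0 := by
    rw [lastVec, Pi.single_apply, if_neg]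
    rw [← pL_eq_last]
    exact hKL
  have hlastL : lastVec (k+1) ℤ (pL k) = 1 := by
    rw [lastVec, pL_eq_last, Pi.single_apply, if_pos rfl]
  have hcongK : (m:ℤ) ∣ b (pK k) := by
    have := hcong (pK k); rwa [hlastK, sub_zero] at this
  have hcongL : (m:ℤ) ∣ b (pL k) - 1 := by
    have := hcong (pL k); rwa [hlastL] at this
  have hcong0 : ∀ i, i ≠ pL k → (m:ℤ) ∣ b i := by
    intro i hi
    have := hcong i
    rwa [lastVec, Pi.single_apply, if_neg (by rwa [← pL_eq_last]), sub_zero] at this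
  -- z = b pL is nonzero and coprime to m
  obtain ⟨t, ht⟩ := hcongL
  have hzm : IsCoprime (b (pL k)) (m:ℤ) := ⟨1, -t, by linarith [ht]⟩
  have hz : b (pL k) ≠ 0 := by
    intro h0
    rw [h0] at ht
    have : (m:ℤ) ∣ 1 := ⟨-t, by linarith⟩
    have := Int.le_of_dvd one_pos this
    omega
  -- D = gcd of coordinates other than pK
  set D := (Finset.univ.erase (pK k)).gcd b with hD
  have hgcd1 : GCDMonoid.gcd (b (pK k)) D = 1 := by
    have : (Finset.univ : Finset (Fin (k+2))) = insert (pK k) (Finset.univ.erase (pK k)) :=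
      (Finset.insert_erase (Finset.mem_univ _)).symm
    have h2 : Finset.univ.gcd b = GCDMonoid.gcd (b (pK k)) D := by
      rw [this, Finset.gcd_insert]
    rw [← h2]
    exact hb
  have hxD : IsCoprime (b (pK k)) D := by
    rw [Int.isCoprime_iff_gcd_eq_one]
    have := Int.coe_gcd (b (pK k)) D
    rw [hgcd1] at this
    exact_mod_cast this
  have hDz : D ∣ b (pL k) :=
    Finset.gcd_dvd (Finset.mem_erase.mpr ⟨(pK_ne_pL).symm ∘ Eq.symm ∘ Eq.symm, Finset.mem_univ _⟩)
  -- find u making pK coordinate coprime to pL coordinate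
  obtain ⟨u, hu⟩ := exists_coprime_ap (b (pK k)) D (b (pL k)) m hz hxD hDz hzm
  -- realize the adjustment by Γ(m)-moves
  obtain ⟨c, hc⟩ := finset_gcd_bezout (Finset.univ.erase (pK k)) b
  have hmove1 := rel_add_combo (m := m) (pK k) (Finset.univ.erase (pK k))
    (Finset.notMem_erase _ _) (fun i => u * c i) b
  have hsum : (m:ℤ) * ∑ i ∈ Finset.univ.erase (pK k), (u * c i) * b i = (m:ℤ) * D * u := by
    have : ∑ i ∈ Finset.univ.erase (pK k), (u * c i) * b i
        = u * ∑ i ∈ Finset.univ.erase (pK k), c i * b i := by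
      rw [Finset.mul_sum]; exact Finset.sum_congr rfl fun i _ => by ring
    rw [this, hc, ← hD]; ring
  rw [hsum] at hmove1
  set b1 := Function.update b (pK k) (b (pK k) + (m:ℤ) * D * u) with hb1
  have hb1K : b1 (pK k) = b (pK k) + (m:ℤ) * D * u := Function.update_self _ _ _
  have hb1L : b1 (pL k) = b (pL k) := Function.update_of_ne (pK_ne_pL).symm _ _
  have hco1 : IsCoprime (b1 (pK k)) (b1 (pL k)) := by rw [hb1K, hb1L]; exact hu
  -- clear the other coordinates
  have hdv1 : ∀ i, i ≠ pL k → (m:ℤ) ∣ b1 i := by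
    intro i hi
    rcases eq_or_ne i (pK k) with rfl | hiK
    · rw [hb1K]
      exact dvd_add hcongK ⟨D * u, by ring⟩
    · rw [hb1, Function.update_of_ne hiK]
      exact hcong0 i hi
  have hmove2 := rel_clear (m := m) hKL Finset.univ b1 hco1 hdv1
  set b2 : Fin (k+2) → ℤ := fun j => if j ∈ Finset.univ ∧ j ≠ pK k ∧ j ≠ pL k then 0 else b1 j
    with hb2
  have hb2K : b2 (pK k) = b1 (pK k) := by simp [hb2]
  have hb2L : b2 (pL k) = b1 (pL k) := by simp [hb2, pK_ne_pL.symm]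
  have hb2O : ∀ p : Fin k, b2 (finSumFinEquiv (Sum.inl p)) = 0 := by
    intro p
    rw [hb2]
    show (if _ ∈ Finset.univ ∧ _ ≠ pK k ∧ _ ≠ pL k then 0 else b1 _) = 0
    rw [if_pos ⟨Finset.mem_univ _, castAdd_ne_pK p, castAdd_ne_pL p⟩]
  -- build the 2x2 completion
  have hyL : b2 (pL k) = b (pL k) := hb2L.trans hb1L
  have hyt : b2 (pL k) = 1 + (m:ℤ) * t := by rw [hyL]; linarith [ht]
  have hcoxy : IsCoprime (b2 (pK k)) (b2 (pL k)):= by rw [hb2K, hb2L]; exact hco1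
  obtain ⟨σ, τ, hst⟩ := id hcoxy
  have hmx : (m:ℤ) ∣ b2 (pK k) := by rw [hb2K]; exact hdv1 (pK k) hKL
  set g : Matrix (Fin 2) (Fin 2) ℤ :=
    !![1 + (m:ℤ) * (-t * τ), (m:ℤ) * (t * σ); b2 (pK k), b2 (pL k)] with hg
  have hg00 : g 0 0 = 1 + (m:ℤ) * (-t * τ) := by rw [hg]; simp
  have hg01 : g 0 1 = (m:ℤ) * (t * σ) := by rw [hg]; simp
  have hg10 : g 1 0 = b2 (pK k) := by rw [hg]; simp
  have hg11 : g 1 1 = b2 (pL k) := by rw [hg]; simp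
  have hdetg : g.det = 1 := by
    rw [Matrix.det_fin_two, hg00, hg01, hg10, hg11]
    have h2 : τ * b2 (pL k) + σ * b2 (pK k) = 1 := by linarith [hst]
    have h3 : (1 + (m:ℤ) * (-t * τ)) * b2 (pL k) - (m:ℤ) * (t * σ) * b2 (pK k)
        = b2 (pL k) - (m:ℤ) * t * (τ * b2 (pL k) + σ * b2 (pK k)) := by ring
    rw [h3, h2, hyt]; ring
  have hdet : (phiB (k := k) g).det = 1 := by rw [det_phiB, hdetg]
  have hmapg : (g.map (Int.cast : ℤ → ZMod m)) = 1 := by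
    obtain ⟨w, hw⟩ := hmx
    have e00 : ((g 0 0 : ℤ) : ZMod m) = 1 := by
      rw [hg00]; push_cast; simp
    have e01 : ((g 0 1 : ℤ) : ZMod m) = 0 := by
      rw [hg01]; push_cast; simp
    have e10 : ((g 1 0 : ℤ) : ZMod m) = 0 := by
      rw [hg10, hw]; push_cast; simp
    have e11 : ((g 1 1 : ℤ) : ZMod m) = 1 := by
      rw [hg11, hyt]; push_cast; simp
    ext i j
    fin_cases i <;> fin_cases j
    · simpa using e00
    · simpa using e01
    · simpa using e10
    · simpa using e11
  have hmove3 : rel (k+1) m (lastVec (k+1) ℤ) b2 := by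
    refine ⟨⟨phiB (k := k) g, hdet⟩, ?_, ?_⟩
    · apply Subtype.ext
      simp only [Matrix.SpecialLinearGroup.map_apply_coe, RingHom.mapMatrix_apply,
        Matrix.SpecialLinearGroup.coe_one]
      have : (phiB (k := k) g).map (Int.castRingHom (ZMod m))
          = phiB (k := k) (g.map (Int.castRingHom (ZMod m))) := map_phiB _ _
      change (phiB (k := k) g).map (Int.castRingHom (ZMod m)) = 1
      rw [this]
      rw [show (g.map (Int.castRingHom (ZMod m)) : Matrix (Fin 2) (Fin 2) (ZMod m))
          = g.map (Int.cast : ℤ → ZMod m) from rfl, hmapg, phiB_one]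
    · rw [show ((⟨phiB (k := k) g, hdet⟩ : SL (k+2) ℤ) : Matrix (Fin (k+2)) (Fin (k+2)) ℤ)
          = phiB (k := k) g from rfl]
      rw [lastVec, ← pL_eq_last, vecMul_single]
      funext j
      rw [phiB_row_last]
      by_cases hjK : j = pK k
      · subst hjK; rw [if_pos rfl]; exact hg10
      · rw [if_neg hjK]
        by_cases hjL : j = pL k
        · subst hjL; rw [if_pos rfl]; exact hg11
        · rw [if_neg hjL, hb2]
          show (0:ℤ) = if j ∈ Finset.univ ∧ j ≠ pK k ∧ j ≠ pL k then 0 else b1 j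
          rw [if_pos ⟨Finset.mem_univ _, hjK, hjL⟩]
  exact rel_trans hmove3 (rel_symm (rel_trans hmove1 hmove2))


end S19

/-- For the congruence subgroup Γ(m) and a primitive a ∈ ℤ^{n+1}, the orbit aΓ(m)
equals the set of primitive vectors congruent to a mod m. -/
theorem stmt19 (n : ℕ) (hn : 1 ≤ n) (m : ℕ) (hm : 0 < m)
    (a : Fin (n+1) → ℤ) (ha : Primitive a) :
    {v : Fin (n+1) → ℤ | ∃ δ : SL (n+1) ℤ,
        (∀ i j, (δ : Matrix (Fin (n+1)) (Fin (n+1)) ℤ) i j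
            ≡ (1 : Matrix (Fin (n+1)) (Fin (n+1)) ℤ) i j [ZMOD (m : ℤ)])
        ∧ Matrix.vecMul a (δ : Matrix (Fin (n+1)) (Fin (n+1)) ℤ) = v}
      = {b : Fin (n+1) → ℤ | Primitive b ∧ ∀ i, b i ≡ a i [ZMOD (m : ℤ)]} := by
  classical
  obtain ⟨k, rfl⟩ : ∃ k, n = k + 1 := ⟨n - 1, by omega⟩
  ext b
  simp only [Set.mem_setOf_eq]
  constructor
  · rintro ⟨δ, hδ, rfl⟩
    have hrel : S19.rel (k+1) m a (Matrix.vecMul a (δ : Matrix (Fin (k+2)) (Fin (k+2)) ℤ)) :=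
      ⟨δ, (S19.phi_eq_one_iff δ).mpr hδ, rfl⟩
    refine ⟨S19.rel_primitive hrel ha, ?_⟩
    intro i
    rw [Int.modEq_iff_dvd]
    have h1 : a i = ∑ l, a l * (1 : Matrix (Fin (k+2)) (Fin (k+2)) ℤ) l i := by
      simp [Matrix.one_apply, mul_ite, Finset.sum_ite_eq']
    have h2 : a i - Matrix.vecMul a (δ : Matrix (Fin (k+2)) (Fin (k+2)) ℤ) i
        = ∑ l, a l * ((1 : Matrix (Fin (k+2)) (Fin (k+2)) ℤ) l i
          - (δ : Matrix (Fin (k+2)) (Fin (k+2)) ℤ) l i) := by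
      rw [Finset.sum_congr rfl (fun l _ => mul_sub (a l) _ _), Finset.sum_sub_distrib, ← h1]
      rfl
    rw [h2]
    exact Finset.dvd_sum fun l _ => Dvd.dvd.mul_left ((hδ l i).dvd) _
  · rintro ⟨hbprim, hcong⟩
    have hrel : S19.rel (k+1) m a b := by
      rcases eq_or_lt_of_le (Nat.one_le_iff_ne_zero.mpr hm.ne') with hm1 | hm2
      · subst hm1
        exact S19.rel_trans (S19.stepA (by omega) _ a rfl ha)
          (S19.rel_symm (S19.stepA (by omega) _ b rfl hbprim))
      · obtain ⟨γ, -, hγ⟩ := S19.stepA (n := k+1) (by omega) _ a rfl ha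
        have hbt_prim : Primitive (Matrix.vecMul b (γ : Matrix (Fin (k+2)) (Fin (k+2)) ℤ)) :=
          S19.primitive_vecMul b γ hbprim
        have hcongt : ∀ i, (m:ℤ) ∣ Matrix.vecMul b (γ : Matrix (Fin (k+2)) (Fin (k+2)) ℤ) i
            - lastVec (k+1) ℤ i := by
          intro i
          rw [← hγ]
          have : Matrix.vecMul b (γ : Matrix (Fin (k+2)) (Fin (k+2)) ℤ) i
              - Matrix.vecMul a (γ : Matrix (Fin (k+2)) (Fin (k+2)) ℤ) i
              = ∑ l, (b l - a l) * (γ : Matrix (Fin (k+2)) (Fin (k+2)) ℤ) l i := by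
            rw [Finset.sum_congr rfl (fun l _ => sub_mul (b l) (a l) _), Finset.sum_sub_distrib]
            rfl
          rw [this]
          exact Finset.dvd_sum fun l _ => Dvd.dvd.mul_right ((hcong l).symm.dvd) _
        obtain ⟨δ, hδ1, hδ2⟩ := S19.completion k m hm2 _ hbt_prim hcongt
        refine ⟨γ * δ * γ⁻¹, ?_, ?_⟩
        · rw [_root_.map_mul, _root_.map_mul, hδ1, mul_one, _root_.map_inv, mul_inv_cancel]
        · rw [Matrix.SpecialLinearGroup.coe_mul, Matrix.SpecialLinearGroup.coe_mul,
            ← Matrix.vecMul_vecMul, ← Matrix.vecMul_vecMul, hγ, hδ2,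
            Matrix.vecMul_vecMul, ← Matrix.SpecialLinearGroup.coe_mul, mul_inv_cancel,
            Matrix.SpecialLinearGroup.coe_one, Matrix.vecMul_one]
    obtain ⟨δ, hδ, hv⟩ := hrel
    exact ⟨δ, (S19.phi_eq_one_iff δ).mp hδ, hv⟩
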